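/- There exists a configuration in the 1D nearest-neighbor model where any single additional point strictly increases the learner's error with respect to the goal g, yet some set of multiple points labeled by f* reduces the error to 0. -/

import Mathlib

open scoped Classical

/-- 1D nearest-neighbor classifier: the label of (a) nearest training point;
on the empty training set it defaults to +1 (all-positive). -/
noncomputable def nn (S : Finset (ℝ × ℝ)) (x : ℝ) : ℝ :=
  if h : S.Nonempty then ((S.exists_min_image (fun p => |x - p.1|) h).choose).2 else 1

/-- Error of the nearest-neighbor classifier trained on `S` with respect to the goal
function `g`, under the uniform distribution on `[0,1]` (Lebesgue measure of the
disagreement region). -/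
noncomputable def nnErr (S : Finset (ℝ × ℝ)) (g : ℝ → ℝ) : ENNReal :=
  MeasureTheory.volume {x ∈ Set.Icc (0 : ℝ) 1 | nn S x ≠ g x}

lemma nn_eq_of (S : Finset (ℝ × ℝ)) (x l : ℝ) (p : ℝ × ℝ) (hp : p ∈ S)
    (h : ∀ q ∈ S, q.2 ≠ l → |x - p.1| < |x - q.1|) : nn S x = l := by
  have hS : S.Nonempty := ⟨p, hp⟩
  unfold nn
  rw [dif_pos hS]
  obtain ⟨hc1, hc2⟩ := (S.exists_min_image (fun p => |x - p.1|) hS).choose_spec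
  by_contra hne
  exact absurd (hc2 p hp) (not_le.mpr (h _ hc1 hne))

noncomputable def Sh0 : Finset (ℝ × ℝ) := {((-1 : ℝ), (1:ℝ)), ((2:ℝ), (-1:ℝ))}

lemma abs_lt_abs_ineq {a b : ℝ} (h : a ^ 2 < b ^ 2) : |a| < |b| := by
  have ha := abs_nonneg a
  have hb := abs_nonneg b
  nlinarith [sq_abs a, sq_abs b]

/-- On `[-1, 1/2)` the classifier trained on `Sh0` outputs `1`. -/
lemma nnA1 (y : ℝ) (h1 : -1 ≤ y) (h2 : y < 1/2) : nn Sh0 y = 1 := by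
  apply nn_eq_of _ _ _ ((-1 : ℝ), (1:ℝ)) (by simp [Sh0])
  intro q hq hql
  simp only [Sh0, Finset.mem_insert, Finset.mem_singleton] at hq
  rcases hq with rfl | rfl
  · exact absurd rfl hql
  · exact abs_lt_abs_ineq (by first | (norm_num; nlinarith) | norm_num | nlinarith)

/-- On `(1/2, 2]` the classifier trained on `Sh0` outputs `-1`. -/
lemma nnA2 (y : ℝ) (h1 : 1/2 < y) (h2 : y ≤ 2) : nn Sh0 y = -1 := by
  apply nn_eq_of _ _ _ ((2 : ℝ), (-1:ℝ)) (by simp [Sh0])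
  intro q hq hql
  simp only [Sh0, Finset.mem_insert, Finset.mem_singleton] at hq
  rcases hq with rfl | rfl
  · exact abs_lt_abs_ineq (by first | (norm_num; nlinarith) | norm_num | nlinarith)
  · exact absurd rfl hql

/-- After inserting a positive point `x ∈ [0, 2/5)`, the classifier outputs `1`
on `[2/5, 1)`. -/
lemma nnB (x : ℝ) (hx0 : 0 ≤ x) (hx1 : x < 2/5) (y : ℝ) (hy1 : 2/5 ≤ y)
    (hy2 : y < 1) : nn (insert (x, (1:ℝ)) Sh0) y = 1 := by
  apply nn_eq_of _ _ _ (x, (1:ℝ)) (by simp)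
  intro q hq hql
  simp only [Sh0, Finset.mem_insert, Finset.mem_singleton] at hq
  rcases hq with rfl | rfl | rfl
  · exact absurd rfl hql
  · exact absurd rfl hql
  · exact abs_lt_abs_ineq (by first | (norm_num; nlinarith) | norm_num | nlinarith)

/-- After inserting a negative point `x ∈ [2/5, 1]`, the classifier outputs `-1`
on `(0, 2/5)`. -/
lemma nnC (x : ℝ) (hx0 : 2/5 ≤ x) (hx1 : x ≤ 1) (y : ℝ) (hy1 : 0 < y)
    (hy2 : y < 2/5) : nn (insert (x, (-1:ℝ)) Sh0) y = -1 := by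
  apply nn_eq_of _ _ _ (x, (-1:ℝ)) (by simp)
  intro q hq hql
  simp only [Sh0, Finset.mem_insert, Finset.mem_singleton] at hq
  rcases hq with rfl | rfl | rfl
  · exact absurd rfl hql
  · exact abs_lt_abs_ineq (by first | (norm_num; nlinarith) | norm_num | nlinarith)
  · exact absurd rfl hql

/-- There is a configuration of the 1D nearest-neighbor model — a goal
threshold function `g` (with `f* = g`) and historical data consistent with `g` having
positive current error — such that adding any single point of `[0,1]` (labeled by `g`)
strictly increases the error, yet some finite set of points labeled by `g` brings the
error to 0. -/
theorem stmt_10 :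
    ∃ (Sh : Finset (ℝ × ℝ)) (b : ℝ) (g : ℝ → ℝ),
      (∀ x, g x = if x < b then 1 else -1) ∧
      (∀ p ∈ Sh, p.2 = g p.1) ∧
      0 < nnErr Sh g ∧
      (∀ x ∈ Set.Icc (0 : ℝ) 1, (x, g x) ∉ Sh →
        nnErr Sh g < nnErr (insert (x, g x) Sh) g) ∧
      (∃ X : Finset ℝ, nnErr (Sh ∪ X.image fun x => (x, g x)) g = 0) := by
  classical
  set g : ℝ → ℝ := fun x => if x < (2/5 : ℝ) then 1 else -1 with hg
  refine ⟨Sh0, 2/5, g, fun x => rfl, ?_, ?_, ?_, ?_⟩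
  · intro p hp
    simp only [Sh0, Finset.mem_insert, Finset.mem_singleton] at hp
    rcases hp with rfl | rfl <;> simp [hg] <;> norm_num
  · -- positive error
    have hsub : Set.Ico (2/5 : ℝ) (1/2) ⊆ {x ∈ Set.Icc (0:ℝ) 1 | nn Sh0 x ≠ g x} := by
      intro y hy
      obtain ⟨hy1, hy2⟩ := hy
      refine ⟨⟨by linarith, by linarith⟩, ?_⟩
      rw [nnA1 y (by linarith) hy2, hg]
      simp only [not_lt.mpr hy1, if_neg (not_lt.mpr hy1)]
      norm_num
    calc (0 : ENNReal) < ENNReal.ofReal (1/2 - 2/5) := by norm_num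
      _ = MeasureTheory.volume (Set.Ico (2/5 : ℝ) (1/2)) := (Real.volume_Ico).symm
      _ ≤ nnErr Sh0 g := MeasureTheory.measure_mono hsub
  · -- single point always hurts
    intro x hx _
    obtain ⟨hx0, hx1⟩ := hx
    have hupper : nnErr Sh0 g ≤ ENNReal.ofReal (1/10) := by
      have hsub : {y ∈ Set.Icc (0:ℝ) 1 | nn Sh0 y ≠ g y} ⊆ Set.Icc (2/5 : ℝ) (1/2) := by
        intro y hy
        obtain ⟨⟨hy0, hy1⟩, hne⟩ := hy
        constructor
        · by_contra hlt
          push_neg at hlt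
          exact hne (by rw [nnA1 y (by linarith) (by linarith), hg]; simp [hlt])
        · by_contra hlt
          push_neg at hlt
          refine hne ?_
          rw [nnA2 y hlt (by linarith), hg]
          have : ¬ y < 2/5 := by linarith
          simp [this]
      calc nnErr Sh0 g ≤ MeasureTheory.volume (Set.Icc (2/5 : ℝ) (1/2)) :=
            MeasureTheory.measure_mono hsub
        _ = ENNReal.ofReal (1/2 - 2/5) := Real.volume_Icc
        _ = ENNReal.ofReal (1/10) := by norm_num
    rcases lt_or_ge x (2/5 : ℝ) with hcase | hcase
    · -- positive point
      have hgx : g x = 1 := by simp [hg, hcase]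
      have hsub : Set.Ico (2/5 : ℝ) 1 ⊆
          {y ∈ Set.Icc (0:ℝ) 1 | nn (insert (x, g x) Sh0) y ≠ g y} := by
        intro y hy
        obtain ⟨hy1, hy2⟩ := hy
        refine ⟨⟨by linarith, by linarith⟩, ?_⟩
        rw [hgx, nnB x hx0 hcase y hy1 hy2, hg]
        have : ¬ y < 2/5 := not_lt.mpr hy1
        simp [this]
        norm_num
      calc nnErr Sh0 g ≤ ENNReal.ofReal (1/10) := hupper
        _ < ENNReal.ofReal (1 - 2/5) := by
            rw [ENNReal.ofReal_lt_ofReal_iff (by norm_num)]; norm_num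
        _ = MeasureTheory.volume (Set.Ico (2/5 : ℝ) 1) := (Real.volume_Ico).symm
        _ ≤ nnErr (insert (x, g x) Sh0) g := MeasureTheory.measure_mono hsub
    · -- negative point
      have hgx : g x = -1 := by simp [hg, not_lt.mpr hcase]
      have hsub : Set.Ioo (0 : ℝ) (2/5) ⊆
          {y ∈ Set.Icc (0:ℝ) 1 | nn (insert (x, g x) Sh0) y ≠ g y} := by
        intro y hy
        obtain ⟨hy1, hy2⟩ := hy
        refine ⟨⟨by linarith, by linarith⟩, ?_⟩
        rw [hgx, nnC x hcase hx1 y hy1 hy2, hg]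
        simp only [if_pos hy2]
        norm_num
      calc nnErr Sh0 g ≤ ENNReal.ofReal (1/10) := hupper
        _ < ENNReal.ofReal (2/5 - 0) := by
            rw [ENNReal.ofReal_lt_ofReal_iff (by norm_num)]; norm_num
        _ = MeasureTheory.volume (Set.Ioo (0 : ℝ) (2/5)) := (Real.volume_Ioo).symm
        _ ≤ nnErr (insert (x, g x) Sh0) g := MeasureTheory.measure_mono hsub
  · -- a finite set achieving zero error
    refine ⟨{(3/10 : ℝ), (1/2 : ℝ)}, ?_⟩
    set S' : Finset (ℝ × ℝ) :=
      Sh0 ∪ ({(3/10 : ℝ), (1/2 : ℝ)} : Finset ℝ).image (fun x => (x, g x)) with hS'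
    have hg3 : g (3/10) = 1 := by norm_num [hg]
    have hg5 : g (1/2) = -1 := by norm_num [hg]
    have hmem : ∀ q ∈ S', q = ((-1:ℝ),(1:ℝ)) ∨ q = ((2:ℝ),(-1:ℝ)) ∨
        q = ((3/10:ℝ),(1:ℝ)) ∨ q = ((1/2:ℝ),(-1:ℝ)) := by
      intro q hq
      simp only [hS', Finset.mem_union, Finset.mem_image, Finset.mem_insert,
        Finset.mem_singleton, Sh0] at hq
      rcases hq with (rfl | rfl) | ⟨a, (rfl | rfl), rfl⟩
      · tauto
      · tauto
      · rw [hg3]; tauto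
      · rw [hg5]; tauto
    have hnn : ∀ y ∈ Set.Icc (0:ℝ) 1, y ≠ 2/5 → nn S' y = g y := by
      intro y hy hne
      obtain ⟨hy0, hy1⟩ := hy
      rcases lt_or_gt_of_ne hne with hlt | hgt
      · rw [hg]; simp only [if_pos hlt]
        apply nn_eq_of _ _ _ ((3/10 : ℝ), (1:ℝ))
          (by simp only [hS', Finset.mem_union]; right
              simp only [Finset.mem_image, Finset.mem_insert, Finset.mem_singleton]
              exact ⟨3/10, Or.inl rfl, by rw [hg3]⟩)
        intro q hq hql
        rcases hmem q hq with rfl | rfl | rfl | rfl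
        · exact absurd rfl hql
        · exact abs_lt_abs_ineq (by first | (norm_num; nlinarith) | norm_num | nlinarith)
        · exact absurd rfl hql
        · exact abs_lt_abs_ineq (by first | (norm_num; nlinarith) | norm_num | nlinarith)
      · rw [hg]
        have : ¬ y < 2/5 := not_lt.mpr (le_of_lt hgt)
        simp only [if_neg this]
        apply nn_eq_of _ _ _ ((1/2 : ℝ), (-1:ℝ))
          (by simp only [hS', Finset.mem_union]; right
              simp only [Finset.mem_image, Finset.mem_insert, Finset.mem_singleton]
              exact ⟨1/2, Or.inr rfl, by rw [hg5]⟩)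
        intro q hq hql
        rcases hmem q hq with rfl | rfl | rfl | rfl
        · exact abs_lt_abs_ineq (by first | (norm_num; nlinarith) | norm_num | nlinarith)
        · exact absurd rfl hql
        · exact abs_lt_abs_ineq (by first | (norm_num; nlinarith) | norm_num | nlinarith)
        · exact absurd rfl hql
    have hsub : {y ∈ Set.Icc (0:ℝ) 1 | nn S' y ≠ g y} ⊆ {(2/5 : ℝ)} := by
      intro y hy
      obtain ⟨hy1, hy2⟩ := hy
      by_contra h
      exact hy2 (hnn y hy1 h)
    refine le_antisymm ?_ zero_le
    calc nnErr S' g ≤ MeasureTheory.volume ({(2/5 : ℝ)} : Set ℝ) :=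
          MeasureTheory.measure_mono hsub
      _ = 0 := Real.volume_singleton
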